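/- Forward invariance via comparison: Let h : ℝⁿ → ℝ be continuously differentiable and x : [0, ∞) → ℝⁿ a solution of ẋ = f(x) + g(x)u(x) such that d/dt h(x(t)) ≥ −α(h(x(t))) for all t, where α : ℝ → ℝ is locally Lipschitz, strictly increasing, and α(0) = 0. If h(x(0)) ≥ 0, then h(x(t)) ≥ 0 for all t ≥ 0. -/

import Mathlib

lemma aux_strict_lt (H : ℝ → ℝ) (Hcont : Continuous H) (t₀ t₁ : ℝ) (hlt : t₀ < t₁)
    (hd : ∀ t ∈ Set.Ioo t₀ t₁, 0 < deriv H t) : H t₀ < H t₁ := by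
  have hmono : StrictMonoOn H (Set.Icc t₀ t₁) := by
    refine strictMonoOn_of_deriv_pos (convex_Icc t₀ t₁) Hcont.continuousOn ?_
    intro t ht
    rw [interior_Icc] at ht
    exact hd t ht
  exact hmono (Set.left_mem_Icc.mpr hlt.le) (Set.right_mem_Icc.mpr hlt.le) hlt

theorem stmt_11 {n m : ℕ}
    (h : EuclideanSpace ℝ (Fin n) → ℝ) (hh : ContDiff ℝ 1 h)
    (f : EuclideanSpace ℝ (Fin n) → EuclideanSpace ℝ (Fin n))
    (g : EuclideanSpace ℝ (Fin n) → EuclideanSpace ℝ (Fin m) →L[ℝ] EuclideanSpace ℝ (Fin n))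
    (u : EuclideanSpace ℝ (Fin n) → EuclideanSpace ℝ (Fin m))
    (x : ℝ → EuclideanSpace ℝ (Fin n))
    (hdyn : ∀ t, HasDerivAt x (f (x t) + g (x t) (u (x t))) t)
    (α : ℝ → ℝ) (hαlip : LocallyLipschitz α) (hαmono : StrictMono α) (hα0 : α 0 = 0)
    (hcbf : ∀ t : ℝ, 0 ≤ t →
      -α (h (x t)) ≤ fderiv ℝ h (x t) (f (x t) + g (x t) (u (x t))))
    (hinit : 0 ≤ h (x 0)) :
    ∀ t : ℝ, 0 ≤ t → 0 ≤ h (x t) := by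
  set H : ℝ → ℝ := fun t => h (x t) with hHdef
  have hH : ∀ t, HasDerivAt H (fderiv ℝ h (x t) (f (x t) + g (x t) (u (x t)))) t := by
    intro t
    exact ((hh.differentiable one_ne_zero (x t)).hasFDerivAt).comp_hasDerivAt t (hdyn t)
  have Hcont : Continuous H := by
    rw [continuous_iff_continuousAt]
    exact fun t => (hH t).continuousAt
  by_contra hcon
  push_neg at hcon
  obtain ⟨t₁, ht₁, hHt₁⟩ := hcon
  set S : Set ℝ := Set.Icc 0 t₁ ∩ H ⁻¹' Set.Ici 0 with hSdef
  have hSclosed : IsClosed S := isClosed_Icc.inter (isClosed_Ici.preimage Hcont)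
  have hSne : S.Nonempty := ⟨0, ⟨le_rfl, ht₁⟩, hinit⟩
  have hSbdd : BddAbove S := ⟨t₁, fun t ht => ht.1.2⟩
  set t₀ := sSup S with ht₀def
  have ht₀S : t₀ ∈ S := hSclosed.csSup_mem hSne hSbdd
  have ht₀le : t₀ ≤ t₁ := ht₀S.1.2
  have ht₀0 : 0 ≤ t₀ := ht₀S.1.1
  have ht₀H : 0 ≤ H t₀ := ht₀S.2
  have ht₀lt : t₀ < t₁ := ht₀le.lt_of_ne (by intro e; rw [e] at ht₀H; linarith)
  have key : H t₀ < H t₁ := by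
    refine aux_strict_lt H Hcont t₀ t₁ ht₀lt ?_
    intro t ht
    have htpos : 0 ≤ t := le_of_lt (lt_of_le_of_lt ht₀0 ht.1)
    have hHtneg : H t < 0 := by
      by_contra hge
      push_neg at hge
      have : t ∈ S := ⟨⟨htpos, le_of_lt ht.2⟩, hge⟩
      exact absurd (le_csSup hSbdd this) (not_le.mpr ht.1)
    have hαneg : α (H t) < 0 := by
      calc α (H t) < α 0 := hαmono hHtneg
      _ = 0 := hα0
    have := hcbf t htpos
    rw [(hH t).deriv]
    linarith
  linarith
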